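/- For a1, a2 in F4^ℓ with error index sets I1 = {i : a1_i ≠ 0, a2_i = 0}, I2 = {i : a1_i = 0, a2_i ≠ 0}, I3 = {i : a1_i ≠ 0, a2_i ≠ 0}, the sum-rank weight of a1*x + a2*x^2 equals 2|I1| + 2|I2| + |I3|. -/

import Mathlib

open scoped Classical

noncomputable section

/-- The field with 4 elements. -/
abbrev F4 := GaloisField 2 2

noncomputable instance : Fintype F4 := Fintype.ofFinite _

/-- The `F2`-linear map `x ↦ x1*x + x2*x^2` on `F4`. -/
noncomputable def Lmap (x1 x2 : F4) : F4 →ₗ[ZMod 2] F4 where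
  toFun x := x1 * x + x2 * x ^ 2
  map_add' x y := by
    have h : (x + y) ^ 2 = x ^ 2 + y ^ 2 := add_pow_char x y 2
    show x1 * (x + y) + x2 * (x + y) ^ 2 = (x1 * x + x2 * x ^ 2) + (x1 * y + x2 * y ^ 2)
    rw [h]; ring
  map_smul' c x := by
    have hc : c ^ 2 = c := ZMod.pow_card c
    simp only [Algebra.smul_def, RingHom.id_apply, mul_pow, ← map_pow, hc]
    ring

/-- `F2`-rank of an `F2`-linear endomorphism of `F4`. -/
noncomputable def rk (f : F4 →ₗ[ZMod 2] F4) : ℕ :=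
  Module.finrank (ZMod 2) (LinearMap.range f)

/-- Sum-rank weight of `a1*x + a2*x^2`. -/
noncomputable def srWt {ℓ : ℕ} (a1 a2 : Fin ℓ → F4) : ℕ :=
  ∑ i, rk (Lmap (a1 i) (a2 i))


lemma finrank_F4 : Module.finrank (ZMod 2) F4 = 2 := GaloisField.finrank 2 (by norm_num)

lemma card_F4 : Fintype.card F4 = 4 := by
  have := GaloisField.card 2 2 (by norm_num)
  simpa [Nat.card_eq_fintype_card] using this

lemma Lmap_apply (x1 x2 x : F4) : Lmap x1 x2 x = x1 * x + x2 * x ^ 2 := rfl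

lemma rk_zero : rk (Lmap 0 0) = 0 := by
  have h : Lmap 0 0 = 0 := by ext x; simp [Lmap_apply]
  simp [rk, h]

lemma rk_inj {x1 x2 : F4} (h : Function.Injective (Lmap x1 x2)) : rk (Lmap x1 x2) = 2 := by
  rw [rk, LinearMap.finrank_range_of_inj h, finrank_F4]

lemma rk_left {x1 : F4} (h : x1 ≠ 0) : rk (Lmap x1 0) = 2 := by
  apply rk_inj
  intro a b hab
  simp only [Lmap_apply, zero_mul, mul_zero, add_zero] at hab
  exact mul_left_cancel₀ h hab

lemma rk_right {x2 : F4} (h : x2 ≠ 0) : rk (Lmap 0 x2) = 2 := by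
  apply rk_inj
  intro a b hab
  simp only [Lmap_apply, zero_mul, zero_add] at hab
  have := mul_left_cancel₀ h hab
  have h2 : (a - b) ^ 2 = 0 := by rw [sub_pow_char]; simp [this]
  have := pow_eq_zero_iff (n := 2) (by norm_num) |>.mp h2
  exact sub_eq_zero.mp this

lemma rk_both {x1 x2 : F4} (h1 : x1 ≠ 0) (h2 : x2 ≠ 0) : rk (Lmap x1 x2) = 1 := by
  set L := Lmap x1 x2
  have hk : L (x1 / x2) = 0 := by
    simp only [L, Lmap_apply, div_pow]
    field_simp
    ring_nf
    simp [CharTwo.two_eq_zero]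
  have hkne : (x1 / x2) ≠ 0 := div_ne_zero h1 h2
  obtain ⟨x, hx⟩ : ∃ x : F4, x ∉ ({0, x1 / x2} : Finset F4) := by
    by_contra hc
    push_neg at hc
    have : (Finset.univ : Finset F4).card ≤ ({0, x1 / x2} : Finset F4).card :=
      Finset.card_le_card fun y _ => hc y
    have h4 : (Finset.univ : Finset F4).card = 4 := by
      simpa using card_F4
    have : ({0, x1 / x2} : Finset F4).card ≤ 2 := Finset.card_insert_le _ _ |>.trans (by simp)
    omega
  simp only [Finset.mem_insert, Finset.mem_singleton, not_or] at hx
  have hxval : L x ≠ 0 := by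
    simp only [L, Lmap_apply]
    intro hz
    have : x * (x1 + x2 * x) = 0 := by rw [mul_add]; ring_nf; ring_nf at hz; linear_combination hz
    rcases mul_eq_zero.mp this with h | h
    · exact hx.1 h
    · have h' : x2 * x = x1 := by
        have := eq_neg_of_add_eq_zero_left h
        simpa [CharTwo.neg_eq] using this.symm
      apply hx.2
      field_simp
      linear_combination h'
  have hrn : rk L + Module.finrank (ZMod 2) (LinearMap.ker L) = 2 := by
    rw [rk, LinearMap.finrank_range_add_finrank_ker, finrank_F4]
  have hker : 1 ≤ Module.finrank (ZMod 2) (LinearMap.ker L) := by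
    have : LinearMap.ker L ≠ ⊥ := by
      intro hb
      exact hkne (by simpa [hb] using (LinearMap.mem_ker.mpr hk))
    exact Submodule.one_le_finrank_iff.mpr this
  have hrk : 1 ≤ rk L := by
    have : LinearMap.range L ≠ ⊥ := by
      intro hb
      exact hxval (by simpa [hb] using LinearMap.mem_range_self L x)
    exact Submodule.one_le_finrank_iff.mpr this
  omega

lemma sum_ind {ℓ : ℕ} (c : ℕ) (p : Fin ℓ → Prop) [DecidablePred p] :
    ∑ i, (if p i then c else 0) = c * (Finset.univ.filter p).card := by
  rw [← Finset.sum_filter, Finset.sum_const, smul_eq_mul, mul_comm]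


theorem stmt4 {ℓ : ℕ} (a1 a2 : Fin ℓ → F4) :
    srWt a1 a2 =
      2 * (Finset.univ.filter (fun i => a1 i ≠ 0 ∧ a2 i = 0)).card +
        2 * (Finset.univ.filter (fun i => a1 i = 0 ∧ a2 i ≠ 0)).card +
        (Finset.univ.filter (fun i => a1 i ≠ 0 ∧ a2 i ≠ 0)).card := by
  have key : ∀ i, rk (Lmap (a1 i) (a2 i)) =
      (if a1 i ≠ 0 ∧ a2 i = 0 then 2 else 0) + (if a1 i = 0 ∧ a2 i ≠ 0 then 2 else 0) +
      (if a1 i ≠ 0 ∧ a2 i ≠ 0 then 1 else 0) := by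
    intro i
    by_cases h1 : a1 i = 0 <;> by_cases h2 : a2 i = 0
    · simp [h1, h2, rk_zero]
    · simp [h1, h2, rk_right h2]
    · simp [h1, h2, rk_left h1]
    · simp [h1, h2, rk_both h1 h2]
  rw [srWt]
  simp_rw [key]
  rw [Finset.sum_add_distrib, Finset.sum_add_distrib, sum_ind, sum_ind, sum_ind, one_mul]
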